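/- Let F be a formal power series in countably many variables x_1, x_2, ... (with each monomial of finite support, graded by weight deg x_i = i, with finitely many monomials in each weight). Then F = 0 if and only if for all sufficiently large n, the substitution x_i ↦ (u_1^i + ... + u_n^i)/i yields the zero power series in u_1,...,u_n. -/

import Mathlib

/-- The weight of a monomial in the variables `x_1, x_2, …` (variable index `i`
stands for `x_{i+1}`, of weight `i+1`). -/
def wtMon (d : ℕ →₀ ℕ) : ℕ := d.sum fun i e => (i + 1) * e

/-- The image of the monomial `∏ x_{i+1}^{d i}` under the substitution
`x_{i+1} ↦ p_{i+1}(u_1,…,u_n)/(i+1)`. -/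
noncomputable def subMon (n : ℕ) (d : ℕ →₀ ℕ) : MvPolynomial (Fin n) ℚ :=
  d.prod fun i e =>
    (((i + 1 : ℕ) : ℚ)⁻¹ • ∑ j : Fin n, MvPolynomial.X j ^ (i + 1)) ^ e

open MvPolynomial


noncomputable def Hfun {n : ℕ} (c : Fin n → ℚ)
    (G : (k : Fin n) → MvPolynomial {j : Fin n // j < k} ℚ) : ℕ → MvPolynomial (Fin n) ℚ
  | k =>
    if h : k < n then
      C (c ⟨k, h⟩)⁻¹ * (X ⟨k, h⟩ -
        aeval (fun j : {j : Fin n // j < ⟨k, h⟩} => Hfun c G j.1.1) (G ⟨k, h⟩))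
    else 0
  termination_by k => k
  decreasing_by exact j.2

lemma aeval_Hfun {n : ℕ} (c : Fin n → ℚ) (hc : ∀ k, c k ≠ 0)
    (G : (k : Fin n) → MvPolynomial {j : Fin n // j < k} ℚ) (k : Fin n) :
    aeval (fun j : Fin n => Hfun c G j.1)
      (C (c k) * X k + rename (fun j : {j : Fin n // j < k} => j.1) (G k)) = X k := by
  have hH : Hfun c G k.1 = C (c k)⁻¹ * (X k -
      aeval (fun j : {j : Fin n // j < k} => Hfun c G j.1.1) (G k)) := by
    rw [Hfun, dif_pos k.2]
  rw [map_add, map_mul, aeval_C, aeval_X, aeval_rename]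
  have : ((fun j : Fin n => Hfun c G j.1) ∘ fun j : {j : Fin n // j < k} => j.1)
      = fun j : {j : Fin n // j < k} => Hfun c G j.1.1 := rfl
  rw [this, hH, algebraMap_eq, ← mul_assoc, ← map_mul, mul_inv_cancel₀ (hc k), map_one, one_mul,
    sub_add_cancel]

lemma triangular_indep {A : Type*} [CommRing A] [Algebra ℚ A] {n : ℕ}
    {v : Fin n → A} (hv : AlgebraicIndependent ℚ v)
    {c : Fin n → ℚ} (hc : ∀ k, c k ≠ 0) {w : Fin n → A}
    (hw : ∀ k, w k - c k • v k ∈ Algebra.adjoin ℚ (v '' {j | j < k})) :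
    AlgebraicIndependent ℚ w := by
  have hex : ∀ k : Fin n, ∃ q : MvPolynomial {j : Fin n // j < k} ℚ,
      aeval (fun j : {j : Fin n // j < k} => v j.1) q = w k - c k • v k := by
    intro k
    have h := hw k
    rw [Set.image_eq_range, Algebra.adjoin_range_eq_range_aeval] at h
    exact h
  choose G hG using hex
  rw [algebraicIndependent_iff_injective_aeval]
  have key : (aeval w : MvPolynomial (Fin n) ℚ →ₐ[ℚ] A) =
      (aeval v).comp (aeval (fun k : Fin n =>
        C (c k) * X k + rename (fun j : {j : Fin n // j < k} => j.1) (G k))) := by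
    ext k
    rw [AlgHom.comp_apply, aeval_X, aeval_X, map_add, map_mul, aeval_C, aeval_X, aeval_rename]
    have : ((v : Fin n → A) ∘ fun j : {j : Fin n // j < k} => j.1)
        = fun j : {j : Fin n // j < k} => v j.1 := rfl
    rw [this, hG k, ← Algebra.smul_def]
    abel
  rw [key, AlgHom.coe_comp]
  have hcomp : ((aeval (fun j : Fin n => Hfun c G j.1)).comp
      (aeval (fun k : Fin n => C (c k) * X k + rename (fun j : {j : Fin n // j < k} => j.1) (G k)))
      : MvPolynomial (Fin n) ℚ →ₐ[ℚ] MvPolynomial (Fin n) ℚ) = AlgHom.id ℚ _ := by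
    apply MvPolynomial.algHom_ext; intro k
    rw [AlgHom.comp_apply, aeval_X, AlgHom.id_apply]
    exact aeval_Hfun c hc G k
  refine (algebraicIndependent_iff_injective_aeval.mp hv).comp ?_
  intro p q h
  have h2 := congrArg (aeval (fun j : Fin n => Hfun c G j.1)) h
  rwa [← AlgHom.comp_apply, ← AlgHom.comp_apply, hcomp, AlgHom.id_apply, AlgHom.id_apply] at h2


lemma esymm_indep (n : ℕ) :
    AlgebraicIndependent ℚ (fun i : Fin n => esymm (Fin n) ℚ (i.1 + 1)) := by
  rw [algebraicIndependent_iff_injective_aeval]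
  have hinj : Function.Injective (esymmAlgHom (Fin n) ℚ n) :=
    esymmAlgHom_injective ℚ (by simp)
  have hval : ∀ p : MvPolynomial (Fin n) ℚ,
      aeval (fun i : Fin n => esymm (Fin n) ℚ (i.1 + 1)) p = (esymmAlgHom (Fin n) ℚ n p).val :=
    fun p => (esymmAlgHom_apply p).symm
  intro p q h
  apply hinj
  apply Subtype.ext
  rw [← hval, ← hval]
  exact h

lemma psum_mem_adjoin (n t : ℕ) (ht : 1 ≤ t) :
    psum (Fin n) ℚ t ∈ Algebra.adjoin ℚ ((fun i : ℕ => esymm (Fin n) ℚ i) '' Set.Icc 1 t) := by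
  induction t using Nat.strong_induction_on with
  | _ t ih =>
    rw [psum_eq_mul_esymm_sub_sum (Fin n) ℚ t ht]
    refine Subalgebra.sub_mem _ ?_ ?_
    · exact Subalgebra.mul_mem _
        (Subalgebra.mul_mem _
          (Subalgebra.pow_mem _ (Subalgebra.neg_mem _ (Subalgebra.one_mem _)) _)
          (Subalgebra.natCast_mem _ t))
        (Algebra.subset_adjoin ⟨t, ⟨ht, le_rfl⟩, rfl⟩)
    · refine Subalgebra.sum_mem _ fun a ha => ?_
      simp only [Finset.mem_filter, Finset.HasAntidiagonal.mem_antidiagonal, Set.mem_Ioo] at ha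
      obtain ⟨hsum, h0, hlt⟩ := ha
      have ha2 : 1 ≤ a.2 := by omega
      have ha2' : a.2 < t := by omega
      refine Subalgebra.mul_mem _
        (Subalgebra.mul_mem _
          (Subalgebra.pow_mem _ (Subalgebra.neg_mem _ (Subalgebra.one_mem _)) _)
          (Algebra.subset_adjoin ⟨a.1, ⟨h0, by omega⟩, rfl⟩)) ?_
      exact Algebra.adjoin_mono (Set.image_mono (Set.Icc_subset_Icc le_rfl ha2'.le))
        (ih a.2 ha2' ha2)

lemma psum_indep (n : ℕ) :
    AlgebraicIndependent ℚ (fun k : Fin n => psum (Fin n) ℚ (k.1 + 1)) := by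
  refine triangular_indep (esymm_indep n)
    (c := fun k => (-1 : ℚ) ^ (k.1 + 1 + 1) * ((k.1 + 1 : ℕ) : ℚ))
    (fun k => by positivity) ?_
  intro k
  have hNewton := psum_eq_mul_esymm_sub_sum (Fin n) ℚ (k.1 + 1) (Nat.succ_pos _)
  have key : psum (Fin n) ℚ (k.1 + 1) -
      ((-1 : ℚ) ^ (k.1 + 1 + 1) * ((k.1 + 1 : ℕ) : ℚ)) • esymm (Fin n) ℚ (k.1 + 1)
      = -∑ a ∈ Finset.HasAntidiagonal.antidiagonal (k.1 + 1) with a.1 ∈ Set.Ioo 0 (k.1 + 1),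
          (-1) ^ a.1 * esymm (Fin n) ℚ a.1 * psum (Fin n) ℚ a.2 := by
    rw [hNewton, smul_eq_C_mul]
    simp only [map_mul, map_pow, map_neg, map_one, map_natCast]
    ring
  rw [key]
  refine Subalgebra.neg_mem _ (Subalgebra.sum_mem _ fun a ha => ?_)
  simp only [Finset.mem_filter, Finset.HasAntidiagonal.mem_antidiagonal, Set.mem_Ioo] at ha
  obtain ⟨hsum, h0, hlt⟩ := ha
  have ha2 : 1 ≤ a.2 := by omega
  have ha2k : a.2 ≤ k.1 := by omega
  have hkn : k.1 < n := k.2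
  refine Subalgebra.mul_mem _ (Subalgebra.mul_mem _
    (Subalgebra.pow_mem _ (Subalgebra.neg_mem _ (Subalgebra.one_mem _)) _) ?_) ?_
  · refine Algebra.subset_adjoin ⟨⟨a.1 - 1, by omega⟩, ?_, ?_⟩
    · simp only [Set.mem_setOf_eq, Fin.lt_def]; omega
    · show esymm (Fin n) ℚ (a.1 - 1 + 1) = esymm (Fin n) ℚ a.1
      congr 1; omega
  · refine Algebra.adjoin_mono ?_ (psum_mem_adjoin n a.2 ha2)
    rintro x ⟨i, ⟨hi1, hi2⟩, rfl⟩
    refine ⟨⟨i - 1, by omega⟩, ?_, ?_⟩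
    · simp only [Set.mem_setOf_eq, Fin.lt_def]; omega
    · show esymm (Fin n) ℚ (i - 1 + 1) = esymm (Fin n) ℚ i
      congr 1; omega

lemma P_indep (n : ℕ) : AlgebraicIndependent ℚ
    (fun k : Fin n => ((k.1 + 1 : ℕ) : ℚ)⁻¹ • psum (Fin n) ℚ (k.1 + 1)) := by
  refine triangular_indep (psum_indep n)
    (c := fun k => ((k.1 + 1 : ℕ) : ℚ)⁻¹) (fun k => by positivity) fun k => ?_
  simp only [sub_self]
  exact Subalgebra.zero_mem _

lemma wt_term_le (d : ℕ →₀ ℕ) (i : ℕ) : (i + 1) * d i ≤ wtMon d := by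
  by_cases h : d i = 0
  · simp [h]
  · exact Finset.single_le_sum (f := fun j => (j + 1) * d j) (fun j _ => Nat.zero_le _)
      (Finsupp.mem_support_iff.mpr h)


/-- A formal power series in countably many variables `x_1, x_2, …`
(given by its coefficient function `F` on monomials; each weight has finitely many
monomials) is zero iff for all sufficiently large `n` the substitution
`x_i ↦ (u_1^i + ⋯ + u_n^i)/i` yields the zero power series, i.e. each
weight-`m` piece maps to zero. -/
theorem stmt_12 (F : (ℕ →₀ ℕ) → ℚ) :
    F = 0 ↔ ∃ N : ℕ, ∀ n ≥ N, ∀ m : ℕ,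
      (∑ᶠ d ∈ {d : ℕ →₀ ℕ | wtMon d = m}, F d • subMon n d) = 0 := by
  constructor
  · rintro rfl
    exact ⟨0, fun n _ m => by simp⟩
  · rintro ⟨N, hN⟩
    funext d0
    show F d0 = 0
    set m := wtMon d0 with hm
    set n := max N m with hn
    have hmn : m ≤ n := le_max_right _ _
    -- basic bounds
    have hle : ∀ d : ℕ →₀ ℕ, wtMon d = m → ∀ i, d i ≤ m := by
      intro d hd i
      have := wt_term_le d i
      rw [hd] at this
      nlinarith [this]
    have hz : ∀ d : ℕ →₀ ℕ, wtMon d = m → ∀ i, m ≤ i → d i = 0 := by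
      intro d hd i hi
      by_contra h
      have h1 : 1 ≤ d i := Nat.one_le_iff_ne_zero.mpr h
      have := wt_term_le d i
      rw [hd] at this
      nlinarith
    -- finiteness of the weight-m monomials
    have hSfin : {d : ℕ →₀ ℕ | wtMon d = m}.Finite := by
      apply Set.Finite.subset
        (Set.finite_Icc (0 : ℕ →₀ ℕ) (∑ i ∈ Finset.range m, Finsupp.single i m))
      intro d hd
      simp only [Set.mem_setOf_eq] at hd
      refine ⟨zero_le, ?_⟩
      rw [Finsupp.le_def]
      intro i
      rw [Finset.sum_apply']
      by_cases hi : i < m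
      · calc d i ≤ m := hle d hd i
          _ = ∑ j ∈ Finset.range m, (Finsupp.single j m) i := by
            simp [Finsupp.single_apply, Finset.sum_ite_eq, hi]
      · rw [hz d hd i (le_of_not_gt hi)]
        exact Nat.zero_le _
    have h0 := hN n (le_max_left _ _) m
    rw [finsum_mem_eq_finite_toFinset_sum _ hSfin] at h0
    -- truncation to Fin n
    set e : (ℕ →₀ ℕ) → (Fin n →₀ ℕ) := fun d =>
      Finsupp.comapDomain Fin.val d (Fin.val_injective.injOn) with he
    have heapp : ∀ (d : ℕ →₀ ℕ) (j : Fin n), e d j = d j.1 := fun d j => rfl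
    set P : Fin n → MvPolynomial (Fin n) ℚ :=
      fun k => ((k.1 + 1 : ℕ) : ℚ)⁻¹ • psum (Fin n) ℚ (k.1 + 1) with hP
    have hsub : ∀ d : ℕ →₀ ℕ, wtMon d = m →
        (e d).prod (fun k t => P k ^ t) = subMon n d := by
      intro d hd
      rw [Finsupp.prod]
      show _ = ∏ i ∈ d.support, (((i + 1 : ℕ) : ℚ)⁻¹ • ∑ j : Fin n, X j ^ (i + 1)) ^ d i
      refine Finset.prod_bij (fun (j : Fin n) (_ : j ∈ (e d).support) => j.1) ?_ ?_ ?_ ?_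
      · intro j hj
        rw [Finsupp.mem_support_iff] at hj ⊢
        rwa [heapp] at hj
      · intro a _ b _ hab
        exact Fin.val_injective hab
      · intro i hi
        have hne : d i ≠ 0 := Finsupp.mem_support_iff.mp hi
        have hin : i < n := by
          have him : i < m := by
            by_contra hcon
            exact hne (hz d hd i (le_of_not_gt hcon))
          omega
        refine ⟨⟨i, hin⟩, ?_, rfl⟩
        rw [Finsupp.mem_support_iff, heapp]
        exact hne
      · intro j hj
        rw [heapp]
        rfl
    have hq : aeval P (∑ d ∈ hSfin.toFinset, monomial (e d) (F d)) = 0 := by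
      rw [map_sum, ← h0]
      refine Finset.sum_congr rfl fun d hd => ?_
      have hdS : wtMon d = m := by simpa using hSfin.mem_toFinset.mp hd
      rw [aeval_monomial, hsub d hdS, ← Algebra.smul_def]
    have hq0 : (∑ d ∈ hSfin.toFinset, monomial (e d) (F d)) = 0 := by
      apply algebraicIndependent_iff_injective_aeval.mp (P_indep n)
      rw [hq, map_zero]
    -- extract coefficient at e d0
    have hd0mem : d0 ∈ hSfin.toFinset := hSfin.mem_toFinset.mpr rfl
    have einj : ∀ d : ℕ →₀ ℕ, wtMon d = m → e d = e d0 → d = d0 := by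
      intro d hd h
      ext i
      by_cases hi : i < n
      · have := DFunLike.congr_fun h (⟨i, hi⟩ : Fin n)
        rwa [heapp, heapp] at this
      · rw [hz d hd i (by omega), hz d0 rfl i (by omega)]
    have hc := congrArg (coeff (e d0)) hq0
    rw [coeff_sum, coeff_zero] at hc
    rw [Finset.sum_eq_single_of_mem d0 hd0mem (fun d hd hne => by
      rw [coeff_monomial, if_neg]
      intro hcon
      exact hne (einj d (by simpa using hSfin.mem_toFinset.mp hd) hcon))] at hc
    rw [coeff_monomial, if_pos rfl] at hc
    exact hc
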